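/- Let H be a real Hilbert space and F : H → H a continuous map satisfying ⟨x − x', F(x) − F(x')⟩ ≤ −λ‖x − x'‖² for all x, x' ∈ H and some λ > 0. Then F has a unique zero ξ ∈ H. -/

import Mathlib

open scoped RealInnerProductSpace
open Filter Topology

universe u


open scoped RealInnerProductSpace


set_option maxHeartbeats 2000000 in
theorem findim_zero (lam : ℝ) (hlam : 0 < lam) :
    ∀ (n : ℕ) (E : Type u) [NormedAddCommGroup E] [InnerProductSpace ℝ E]
      [FiniteDimensional ℝ E], Module.finrank ℝ E = n →
      ∀ g : E → E, Continuous g →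
      (∀ x y : E, lam * ‖x - y‖ ^ 2 ≤ ⟪g x - g y, x - y⟫) →
      ∃ x, g x = 0 := by
  intro n
  induction n with
  | zero =>
    intro E _ _ _ hrank g hg hmono
    have : Subsingleton E := Module.finrank_zero_iff.mp hrank
    exact ⟨0, Subsingleton.elim _ _⟩
  | succ n ih =>
    intro E _ _ _ hrank g hg hmono
    have hpos : 0 < Module.finrank ℝ E := by omega
    have : Nontrivial E := Module.nontrivial_of_finrank_pos hpos
    obtain ⟨x0, hx0⟩ := exists_ne (0 : E)
    set u : E := ‖x0‖⁻¹ • x0 with hu_def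
    have hu : ‖u‖ = 1 := by
      rw [hu_def, norm_smul, norm_inv, norm_norm,
        inv_mul_cancel₀ (norm_ne_zero_iff.mpr hx0)]
    have hu0 : u ≠ 0 := by
      intro h; rw [h, norm_zero] at hu; norm_num at hu
    set V : Submodule ℝ E := (Submodule.span ℝ {u})ᗮ with hV
    have hrankV : Module.finrank ℝ ↥V = n := by
      have h1 := Submodule.finrank_add_finrank_orthogonal (Submodule.span ℝ {u})
      rw [← hV, finrank_span_singleton hu0, hrank] at h1
      omega
    have hcoord : Continuous fun p : ↥V × ℝ => (p.1 : E) + p.2 • u :=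
      (continuous_subtype_val.comp continuous_fst).add (continuous_snd.smul continuous_const)
    set Φ : ↥V × ℝ → ℝ := fun p => ⟪g ((p.1 : E) + p.2 • u), u⟫ with hΦdef
    have hΦcont : Continuous Φ := (hg.comp hcoord).inner continuous_const
    -- slope inequality
    have hslope : ∀ (v : ↥V) (s t : ℝ),
        lam * (s - t) ^ 2 ≤ (Φ (v, s) - Φ (v, t)) * (s - t) := by
      intro v s t
      have h := hmono ((v : E) + s • u) ((v : E) + t • u)
      have hxy : ((v : E) + s • u) - ((v : E) + t • u) = (s - t) • u := by
        rw [sub_smul]; abel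
      rw [hxy] at h
      have hn : ‖(s - t) • u‖ ^ 2 = (s - t) ^ 2 := by
        rw [norm_smul, hu, mul_one, Real.norm_eq_abs]
        exact sq_abs _
      rw [hn] at h
      calc lam * (s - t) ^ 2 ≤ ⟪g ((v : E) + s • u) - g ((v : E) + t • u), (s - t) • u⟫ := h
        _ = (Φ (v, s) - Φ (v, t)) * (s - t) := by
            rw [real_inner_smul_right, inner_sub_left]
            ring
    -- existence of root, with bound
    have hroot_ex : ∀ v : ↥V, ∃ t : ℝ, Φ (v, t) = 0 ∧ |t| ≤ |Φ (v, 0)| / lam := by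
      intro v
      set M : ℝ := |Φ (v, 0)| / lam with hM
      have hlamM : lam * M = |Φ (v, 0)| := by
        rw [hM]; field_simp
      have hM0 : 0 ≤ M := div_nonneg (abs_nonneg _) hlam.le
      rcases eq_or_lt_of_le hM0 with hM0' | hMpos
      · refine ⟨0, ?_, by simpa using hM0⟩
        have h0 : |Φ (v, 0)| = 0 := by rw [← hlamM, ← hM0']; ring
        exact abs_eq_zero.mp h0
      · have hfM : 0 ≤ Φ (v, M) := by
          have h := hslope v M 0
          simp only [sub_zero] at h
          nlinarith [neg_abs_le (Φ (v, 0))]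
        have hfmM : Φ (v, -M) ≤ 0 := by
          have h := hslope v (-M) 0
          simp only [sub_zero] at h
          nlinarith [le_abs_self (Φ (v, 0))]
        have hcont' : ContinuousOn (fun t : ℝ => Φ (v, t)) (Set.Icc (-M) M) :=
          (hΦcont.comp (continuous_const.prodMk continuous_id)).continuousOn
        have hsub := intermediate_value_Icc (by linarith : -M ≤ M) hcont'
        obtain ⟨t, ht, htv⟩ := hsub ⟨hfmM, hfM⟩
        exact ⟨t, htv, abs_le.mpr ⟨ht.1, ht.2⟩⟩
    have hroot_uniq : ∀ (v : ↥V) (s t : ℝ), Φ (v, s) = 0 → Φ (v, t) = 0 → s = t := by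
      intro v s t hs ht
      have h := hslope v s t
      rw [hs, ht] at h
      have h2 : (s - t) ^ 2 = 0 := by nlinarith [sq_nonneg (s - t)]
      have h3 := pow_eq_zero_iff (n := 2) (by norm_num) |>.mp h2
      linarith
    choose τ hτ hτbd using hroot_ex
    -- continuity of τ
    have hτcont : Continuous τ := by
      rw [continuous_iff_seqContinuous]
      intro vs v hvs
      apply Filter.tendsto_of_subseq_tendsto
      intro ns hns
      have hbc : Continuous fun w : ↥V => |Φ (w, 0)| / lam :=
        ((hΦcont.comp ((continuous_id.prodMk continuous_const))).abs).div_const lam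
      have htb : Filter.Tendsto (fun k => |Φ (vs k, 0)| / lam) Filter.atTop
          (nhds (|Φ (v, 0)| / lam)) := (hbc.tendsto v).comp hvs
      obtain ⟨C, hC⟩ := htb.bddAbove_range
      have hbd2 : ∀ k, τ (vs (ns k)) ∈ Set.Icc (-C) C := by
        intro k
        have h1 : |τ (vs (ns k))| ≤ C :=
          le_trans (hτbd _) (hC (Set.mem_range_self (ns k)))
        exact abs_le.mp h1
      obtain ⟨a, -, φ, hφmono, hφtend⟩ :=
        tendsto_subseq_of_bounded (Metric.isBounded_Icc (-C) C) hbd2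
      refine ⟨φ, ?_⟩
      have hvs' : Filter.Tendsto (fun k => vs (ns (φ k))) Filter.atTop (nhds v) :=
        hvs.comp (hns.comp hφmono.tendsto_atTop)
      have hpair : Filter.Tendsto (fun k => ((vs (ns (φ k)), τ (vs (ns (φ k)))) : ↥V × ℝ))
          Filter.atTop (nhds (v, a)) := hvs'.prodMk_nhds hφtend
      have hz : Φ (v, a) = 0 := by
        have h1 : Filter.Tendsto (fun k => Φ (vs (ns (φ k)), τ (vs (ns (φ k)))))
            Filter.atTop (nhds (Φ (v, a))) := (hΦcont.tendsto _).comp hpair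
        have h2 : (fun k => Φ (vs (ns (φ k)), τ (vs (ns (φ k))))) = fun _ => (0 : ℝ) := by
          funext k; exact hτ _
        rw [h2] at h1
        exact tendsto_nhds_unique h1 tendsto_const_nhds
      have ha : a = τ v := hroot_uniq v a (τ v) hz (hτ v)
      rw [← ha]
      exact hφtend
    -- the reduced map on V
    set P := Submodule.orthogonalProjection V with hP
    have huV : ∀ z : ↥V, ⟪(z : E), u⟫ = 0 := by
      intro z
      have hz' : (z : E) ∈ (Submodule.span ℝ {u})ᗮ := z.2
      rw [Submodule.mem_orthogonal] at hz'
      have h := hz' u (Submodule.mem_span_singleton_self u)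
      rw [real_inner_comm] at h
      exact h
    have key : ∃ v : ↥V, P (g ((v : E) + τ v • u)) = 0 := by
      refine ih ↥V hrankV (fun v => P (g ((v : E) + τ v • u)))
        (P.continuous.comp (hg.comp (continuous_subtype_val.add (hτcont.smul continuous_const))))
        ?_
      intro v w
      beta_reduce
      set x : E := (v : E) + τ v • u with hx
      set y : E := (w : E) + τ w • u with hy
      set d : E := (v : E) - (w : E) with hd
      have hvw : d ∈ V := Submodule.sub_mem V v.2 w.2
      have hPinner : ∀ z : E, ⟪(P z : E), d⟫ = ⟪z, d⟫ := by
        intro z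
        have hmem : z - (P z : E) ∈ Vᗮ := Submodule.sub_starProjection_mem_orthogonal (K := V) z
        have h0 : ⟪z - (P z : E), d⟫ = 0 := by
          rw [real_inner_comm]
          exact (Submodule.mem_orthogonal V _).mp hmem _ hvw
        rw [inner_sub_left] at h0
        linarith
      have hgu : ⟪g x - g y, u⟫ = 0 := by
        rw [inner_sub_left]
        have h1 : ⟪g x, u⟫ = 0 := hτ v
        have h2 : ⟪g y, u⟫ = 0 := hτ w
        rw [h1, h2]; ring
      have e3 : x - y = d + (τ v - τ w) • u := by
        rw [hx, hy, hd, sub_smul]; abel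
      have hinner2 : ⟪g x - g y, x - y⟫ = ⟪g x - g y, d⟫ := by
        rw [e3, inner_add_right, real_inner_smul_right, hgu]; ring
      have hcoeinner : ⟪P (g x) - P (g y), v - w⟫ = ⟪(P (g x) : E) - (P (g y) : E), d⟫ := by
        rw [Submodule.coe_inner, Submodule.coe_sub, Submodule.coe_sub, hd]
      have hproj : ⟪(P (g x) : E) - (P (g y) : E), d⟫ = ⟪g x - g y, d⟫ := by
        rw [inner_sub_left, hPinner, hPinner, ← inner_sub_left]
      have hcoenorm : ‖v - w‖ = ‖d‖ := by
        rw [hd, ← Submodule.coe_sub]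
        rfl
      have hnorm : ‖d‖ ^ 2 ≤ ‖x - y‖ ^ 2 := by
        rw [e3, norm_add_sq_real]
        have h5 : ⟪d, (τ v - τ w) • u⟫ = 0 := by
          rw [real_inner_smul_right, hd, ← Submodule.coe_sub, huV (v - w)]
          ring
        rw [h5]
        nlinarith [sq_nonneg ‖(τ v - τ w) • u‖]
      rw [hcoeinner, hproj, ← hinner2, hcoenorm]
      calc lam * ‖d‖ ^ 2 ≤ lam * ‖x - y‖ ^ 2 := by nlinarith
        _ ≤ ⟪g x - g y, x - y⟫ := hmono x y
    obtain ⟨v₀, hv₀⟩ := key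
    refine ⟨(v₀ : E) + τ v₀ • u, ?_⟩
    have hmem : g ((v₀ : E) + τ v₀ • u) ∈ Vᗮ := by
      rw [← Submodule.orthogonalProjectionOnto_eq_zero_iff (K := V)]
      exact hv₀
    have hVorth : Vᗮ = Submodule.span ℝ {u} :=
      Submodule.orthogonal_orthogonal _
    rw [hVorth, Submodule.mem_span_singleton] at hmem
    obtain ⟨c, hc⟩ := hmem
    have hcu : ⟪g ((v₀ : E) + τ v₀ • u), u⟫ = 0 := hτ v₀
    rw [← hc, real_inner_smul_left, real_inner_self_eq_norm_sq, hu] at hcu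
    have hc0 : c = 0 := by linarith [hcu]
    rw [← hc, hc0, zero_smul]

section
variable {H : Type u} [NormedAddCommGroup H] [InnerProductSpace ℝ H]

theorem Cball (lam : ℝ) (hlam : 0 < lam) (x c0 : H) :
    {z : H | lam * ‖z - x‖ ^ 2 ≤ ⟪z - x, c0⟫} =
      Metric.closedBall (x + (2 * lam)⁻¹ • c0) (‖c0‖ / (2 * lam)) := by
  have h2l : (0 : ℝ) < 2 * lam := by linarith
  ext z
  simp only [Set.mem_setOf_eq, Metric.mem_closedBall, dist_eq_norm]
  have hre : z - (x + (2 * lam)⁻¹ • c0) = (z - x) - (2 * lam)⁻¹ • c0 := by abel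
  have key : ‖z - (x + (2 * lam)⁻¹ • c0)‖ ^ 2
      = ‖z - x‖ ^ 2 - lam⁻¹ * ⟪z - x, c0⟫ + (‖c0‖ / (2 * lam)) ^ 2 := by
    rw [hre, norm_sub_sq_real, real_inner_smul_right, norm_smul, Real.norm_eq_abs,
      abs_of_pos (inv_pos.mpr h2l)]
    field_simp
  constructor
  · intro h
    have hsq : ‖z - (x + (2 * lam)⁻¹ • c0)‖ ^ 2 ≤ (‖c0‖ / (2 * lam)) ^ 2 := by
      rw [key]
      have : ‖z - x‖ ^ 2 - lam⁻¹ * ⟪z - x, c0⟫ ≤ 0 := by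
        have h3 : lam⁻¹ * (lam * ‖z - x‖ ^ 2) ≤ lam⁻¹ * ⟪z - x, c0⟫ :=
          mul_le_mul_of_nonneg_left h (inv_pos.mpr hlam).le
        rw [← mul_assoc, inv_mul_cancel₀ hlam.ne', one_mul] at h3
        linarith
      linarith
    exact (pow_le_pow_iff_left₀ (norm_nonneg _) (div_nonneg (norm_nonneg _) h2l.le)
      (by norm_num)).mp hsq
  · intro h
    have hsq : ‖z - (x + (2 * lam)⁻¹ • c0)‖ ^ 2 ≤ (‖c0‖ / (2 * lam)) ^ 2 := by
      apply pow_le_pow_left₀ (norm_nonneg _) h _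
    rw [key] at hsq
    have h4 : ‖z - x‖ ^ 2 - lam⁻¹ * ⟪z - x, c0⟫ ≤ 0 := by linarith
    have h5 : lam * (‖z - x‖ ^ 2 - lam⁻¹ * ⟪z - x, c0⟫) ≤ 0 :=
      mul_nonpos_of_nonneg_of_nonpos hlam.le h4
    rw [mul_sub, ← mul_assoc, mul_inv_cancel₀ hlam.ne', one_mul] at h5
    linarith

set_option maxHeartbeats 1000000 in
theorem galerkin (F : H → H) (hcont : Continuous F) (lam : ℝ) (hlam : 0 < lam)
    (hdiss : ∀ x x' : H, ⟪x - x', F x - F x'⟫ ≤ -lam * ‖x - x'‖ ^ 2)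
    (V : Submodule ℝ H) (hfd : FiniteDimensional ℝ ↥V) :
    ∃ ξ : H, ξ ∈ V ∧ ‖ξ‖ ≤ ‖F 0‖ / lam ∧
      ∀ x ∈ V, lam * ‖ξ - x‖ ^ 2 ≤ ⟪ξ - x, F x⟫ := by
  haveI := hfd
  set P := Submodule.orthogonalProjection V with hP
  have key : ∃ v : ↥V, -(P (F (v : H))) = 0 := by
    refine findim_zero lam hlam (Module.finrank ℝ ↥V) ↥V rfl
      (fun v => -(P (F (v : H))))
      ((P.continuous.comp (hcont.comp continuous_subtype_val)).neg) ?_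
    intro v w
    beta_reduce
    set d : H := (v : H) - (w : H) with hd
    have hvw : d ∈ V := Submodule.sub_mem V v.2 w.2
    have hPinner : ∀ z : H, ⟪(P z : H), d⟫ = ⟪z, d⟫ := by
      intro z
      have hmem : z - (P z : H) ∈ Vᗮ := Submodule.sub_starProjection_mem_orthogonal (K := V) z
      have h0 : ⟪z - (P z : H), d⟫ = 0 := by
        rw [real_inner_comm]
        exact (Submodule.mem_orthogonal V _).mp hmem _ hvw
      rw [inner_sub_left] at h0
      linarith
    have hcoe : ⟪-(P (F (v : H))) - -(P (F (w : H))), v - w⟫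
        = ⟪(P (F (w : H)) : H) - (P (F (v : H)) : H), d⟫ := by
      rw [Submodule.coe_inner, hd]
      congr 1
      push_cast
      abel
    rw [hcoe, inner_sub_left, hPinner, hPinner, ← inner_sub_left]
    have hdd := hdiss (v : H) (w : H)
    have hcn : ‖v - w‖ = ‖d‖ := by rw [hd, ← Submodule.coe_sub]; rfl
    have hsym : ⟪F (w : H) - F (v : H), d⟫ = -⟪(v : H) - (w : H), F (v : H) - F (w : H)⟫ := by
      rw [real_inner_comm, hd, inner_sub_right, inner_sub_right]
      ring
    rw [hcn, hsym]
    have : ⟪(v : H) - (w : H), F (v : H) - F (w : H)⟫ ≤ -lam * ‖d‖ ^ 2 := by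
      rw [hd]
      exact hdd
    linarith
  obtain ⟨v₀, hv₀⟩ := key
  rw [neg_eq_zero] at hv₀
  have hperp : ∀ y ∈ V, ⟪y, F (v₀ : H)⟫ = 0 := by
    have hmem : F (v₀ : H) ∈ Vᗮ := Submodule.orthogonalProjectionOnto_eq_zero_iff.mp hv₀
    exact fun y hy => (Submodule.mem_orthogonal V _).mp hmem y hy
  set ξ : H := (v₀ : H) with hξ
  have hKmem : ∀ x ∈ V, lam * ‖ξ - x‖ ^ 2 ≤ ⟪ξ - x, F x⟫ := by
    intro x hx
    have h1 : ⟪ξ - x, F ξ⟫ = 0 := hperp _ (Submodule.sub_mem V v₀.2 hx)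
    have h2 := hdiss ξ x
    have h3 : ⟪ξ - x, F x⟫ = ⟪ξ - x, F x - F ξ⟫ + ⟪ξ - x, F ξ⟫ := by
      rw [inner_sub_right]; ring
    have h4 : ⟪ξ - x, F x - F ξ⟫ = -⟪ξ - x, F ξ - F x⟫ := by
      rw [inner_sub_right, inner_sub_right]; ring
    rw [h3, h4, h1]
    linarith
  have hbound : ‖ξ‖ ≤ ‖F 0‖ / lam := by
    have h0 := hKmem 0 (Submodule.zero_mem V)
    rw [sub_zero] at h0
    have h5 : ⟪ξ, F 0⟫ ≤ ‖ξ‖ * ‖F 0‖ := real_inner_le_norm _ _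
    rw [le_div_iff₀ hlam]
    nlinarith [norm_nonneg ξ, norm_nonneg (F 0)]
  exact ⟨ξ, v₀.2, hbound, hKmem⟩

set_option maxHeartbeats 2000000 in
theorem exists_zero [CompleteSpace H] (F : H → H) (hcont : Continuous F)
    (lam : ℝ) (hlam : 0 < lam)
    (hdiss : ∀ x x' : H, ⟪x - x', F x - F x'⟫ ≤ -lam * ‖x - x'‖ ^ 2) :
    ∃ ξ : H, F ξ = 0 := by
  set R : ℝ := ‖F 0‖ / lam with hR
  have hR0 : 0 ≤ R := div_nonneg (norm_nonneg _) hlam.le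
  set C : H → Set H := fun x => {z | lam * ‖z - x‖ ^ 2 ≤ ⟪z - x, F x⟫} with hC
  have hCmem : ∀ x z, z ∈ C x ↔ lam * ‖z - x‖ ^ 2 ≤ ⟪z - x, F x⟫ := by
    intro x z; rw [hC]; exact Iff.rfl
  have hCclosed : ∀ x, IsClosed (C x) := by
    intro x
    have : C x = Metric.closedBall (x + (2 * lam)⁻¹ • F x) (‖F x‖ / (2 * lam)) := by
      rw [hC]; exact Cball lam hlam x (F x)
    rw [this]; exact Metric.isClosed_closedBall
  have hCconv : ∀ x, Convex ℝ (C x) := by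
    intro x
    have : C x = Metric.closedBall (x + (2 * lam)⁻¹ • F x) (‖F x‖ / (2 * lam)) := by
      rw [hC]; exact Cball lam hlam x (F x)
    rw [this]; exact convex_closedBall _ _
  set K : Submodule ℝ H → Set H := fun V => ⋂ x ∈ (V : Set H), C x with hK
  have hKmem : ∀ (V : Submodule ℝ H) (z : H), z ∈ K V ↔ ∀ x ∈ V, z ∈ C x := by
    intro V z; rw [hK]; simp only [Set.mem_iInter, SetLike.mem_coe]
  have hKclosed : ∀ V, IsClosed (K V) := by
    intro V; rw [hK]; exact isClosed_biInter fun x _ => hCclosed x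
  have hKconv : ∀ V, Convex ℝ (K V) := by
    intro V; rw [hK]; exact convex_iInter₂ fun x _ => hCconv x
  have hKsub : ∀ V W : Submodule ℝ H, V ≤ W → K W ⊆ K V := by
    intro V W hVW z hz
    rw [hKmem] at hz ⊢
    exact fun x hx => hz x (hVW hx)
  -- minimal norm points
  have hmin : ∀ (V : Submodule ℝ H), FiniteDimensional ℝ ↥V →
      ∃ p : H, p ∈ K V ∧ (∀ z ∈ K V, ‖p‖ ≤ ‖z‖) ∧ ‖p‖ ≤ R := by
    intro V hV
    obtain ⟨ξ, hξV, hξR, hξK⟩ := galerkin F hcont lam hlam hdiss V hV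
    have hξmem : ξ ∈ K V := by
      rw [hKmem]; intro x hx; rw [hCmem]; exact hξK x hx
    obtain ⟨p, hpK, hpeq⟩ := exists_norm_eq_iInf_of_complete_convex ⟨ξ, hξmem⟩
      ((hKclosed V).isComplete) (hKconv V) 0
    have hmin' : ∀ z ∈ K V, ‖p‖ ≤ ‖z‖ := by
      intro z hz
      have hbdd : BddBelow (Set.range fun w : ↥(K V) => ‖(0 : H) - ↑w‖) :=
        ⟨0, by rintro r ⟨w, rfl⟩; exact norm_nonneg _⟩
      have h1 : (⨅ w : ↥(K V), ‖(0 : H) - ↑w‖) ≤ ‖(0 : H) - z‖ := ciInf_le hbdd ⟨z, hz⟩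
      rw [← hpeq] at h1
      simpa using h1
    exact ⟨p, hpK, hmin', le_trans (hmin' ξ hξmem) hξR⟩
  choose cp hcp1 hcp2 hcp3 using hmin
  -- the sup of minimal norms
  set S : Set ℝ := {r | ∃ (V : Submodule ℝ H) (hV : FiniteDimensional ℝ ↥V), r = ‖cp V hV‖}
    with hS
  have hbotfd : FiniteDimensional ℝ ↥(⊥ : Submodule ℝ H) := inferInstance
  have hSne : S.Nonempty := ⟨‖cp ⊥ hbotfd‖, ⟨⊥, hbotfd, rfl⟩⟩
  have hSub : ∀ r ∈ S, r ≤ R := by rintro r ⟨V, hV, rfl⟩; exact hcp3 V hV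
  have hSbdd : BddAbove S := ⟨R, hSub⟩
  set μ : ℝ := sSup S with hμ
  have hμR : μ ≤ R := csSup_le hSne hSub
  have hρ : ∀ (V : Submodule ℝ H) (hV : FiniteDimensional ℝ ↥V), ‖cp V hV‖ ≤ μ :=
    fun V hV => le_csSup hSbdd ⟨V, hV, rfl⟩
  -- quantitative parallelogram estimate
  have hquant : ∀ (V W : Submodule ℝ H) (hV : FiniteDimensional ℝ ↥V)
      (hW : FiniteDimensional ℝ ↥W), V ≤ W →
      ‖cp V hV - cp W hW‖ ^ 2 ≤ 2 * ‖cp W hW‖ ^ 2 - 2 * ‖cp V hV‖ ^ 2 := by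
    intro V W hV hW hVW
    set a := cp V hV with ha
    set b := cp W hW with hb
    have hbK : b ∈ K V := hKsub V W hVW (hcp1 W hW)
    have hmid : (1/2 : ℝ) • a + (1/2 : ℝ) • b ∈ K V :=
      hKconv V (hcp1 V hV) hbK (by norm_num) (by norm_num) (by norm_num)
    have h2 : ‖a‖ ≤ ‖(1/2 : ℝ) • a + (1/2 : ℝ) • b‖ := hcp2 V hV _ hmid
    have h3 : ‖(1/2 : ℝ) • a + (1/2 : ℝ) • b‖ = (1/2) * ‖a + b‖ := by
      rw [← smul_add, norm_smul, Real.norm_eq_abs]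
      norm_num
    have hpar := parallelogram_law_with_norm ℝ a b
    have h4 : 2 * ‖a‖ ≤ ‖a + b‖ := by rw [h3] at h2; linarith
    have h5 : (2 * ‖a‖) ^ 2 ≤ ‖a + b‖ ^ 2 := pow_le_pow_left₀ (by positivity) h4 2
    nlinarith [h5, hpar]
  -- a maximizing sequence
  have hseqS : ∀ n : ℕ, ∃ (V : Submodule ℝ H) (hV : FiniteDimensional ℝ ↥V),
      μ - 1/(n+1) < ‖cp V hV‖ := by
    intro n
    have hlt : μ - 1/(n+1) < μ := by
      have h0 : (0 : ℝ) < 1/(n+1) := by positivity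
      linarith
    obtain ⟨r, hrS, hr⟩ := exists_lt_of_lt_csSup hSne hlt
    obtain ⟨V, hV, rfl⟩ := hrS
    exact ⟨V, hV, hr⟩
  choose Vs hVsfd hVslt using hseqS
  have hWfd' : ∀ n : ℕ, FiniteDimensional ℝ ↥((Finset.range (n+1)).sup Vs) := by
    intro n
    induction n with
    | zero => rw [Finset.range_one, Finset.sup_singleton]; exact hVsfd 0
    | succ k ih =>
      rw [Finset.range_add_one, Finset.sup_insert]
      haveI := hVsfd (k+1)
      haveI := ih
      infer_instance
  set W : ℕ → Submodule ℝ H := fun n => (Finset.range (n+1)).sup Vs with hWdef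
  have hWfd : ∀ n, FiniteDimensional ℝ ↥(W n) := hWfd'
  have hWmono : ∀ {n m : ℕ}, n ≤ m → W n ≤ W m := by
    intro n m h
    exact Finset.sup_mono (Finset.range_subset_range.mpr (by omega))
  have hcple : ∀ (V W : Submodule ℝ H) (hV : FiniteDimensional ℝ ↥V)
      (hW : FiniteDimensional ℝ ↥W), V ≤ W → ‖cp V hV‖ ≤ ‖cp W hW‖ :=
    fun V W hV hW h => hcp2 V hV _ (hKsub V W h (hcp1 W hW))
  have hWlow : ∀ n : ℕ, μ - 1/(n+1) < ‖cp (W n) (hWfd n)‖ := by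
    intro n
    refine lt_of_lt_of_le (hVslt n) (hcple _ _ _ _ ?_)
    exact Finset.le_sup (Finset.self_mem_range_succ n)
  -- key Cauchy-type estimate
  have hkey : ∀ (n : ℕ) (W' : Submodule ℝ H) (hW' : FiniteDimensional ℝ ↥W'), W n ≤ W' →
      ‖cp (W n) (hWfd n) - cp W' hW'‖ ^ 2 ≤ 4 * R * (1/(n+1)) := by
    intro n W' hW'fd hle
    have hq := hquant (W n) W' (hWfd n) hW'fd hle
    have h1 : ‖cp (W n) (hWfd n)‖ ≤ ‖cp W' hW'fd‖ := hcple _ _ _ _ hle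
    have h2 := hρ W' hW'fd
    have h3 := hWlow n
    have h4 : (0:ℝ) ≤ ‖cp (W n) (hWfd n)‖ := norm_nonneg _
    have h5 : (0:ℝ) < 1/(n+1) := by positivity
    nlinarith [hμR, hR0]
  have hcauchy : CauchySeq (fun n => cp (W n) (hWfd n)) := by
    apply cauchySeq_of_le_tendsto_0 (fun N : ℕ => Real.sqrt (4 * R * (1/(N+1))))
    · intro n m N hn hm
      have hdle : ∀ {i j : ℕ}, i ≤ j → N ≤ i →
          dist (cp (W i) (hWfd i)) (cp (W j) (hWfd j)) ≤ Real.sqrt (4 * R * (1/(N+1))) := by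
        intro i j hij hNi
        rw [dist_eq_norm, Real.le_sqrt (norm_nonneg _) (by positivity)]
        calc ‖cp (W i) (hWfd i) - cp (W j) (hWfd j)‖ ^ 2 ≤ 4 * R * (1/(i+1)) :=
              hkey i (W j) (hWfd j) (hWmono hij)
          _ ≤ 4 * R * (1/(N+1)) := by
              apply mul_le_mul_of_nonneg_left _ (by positivity)
              apply one_div_le_one_div_of_le (by positivity)
              have : (N : ℝ) ≤ i := Nat.cast_le.mpr hNi
              linarith
      rcases le_total n m with h | h
      · exact hdle h hn
      · rw [dist_comm]; exact hdle h hm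
    · have h0 : Tendsto (fun N : ℕ => 4 * R * (1/(N+1) : ℝ)) atTop (𝓝 0) := by
        have h1 := tendsto_one_div_add_atTop_nhds_zero_nat (𝕜 := ℝ)
        have h2 := h1.const_mul (4 * R)
        simpa using h2
      have h3 := (Real.continuous_sqrt.tendsto 0).comp h0
      simpa [Function.comp_def] using h3
  obtain ⟨z, hz⟩ := cauchySeq_tendsto_of_complete hcauchy
  -- z belongs to every C x
  have hzC : ∀ x : H, lam * ‖z - x‖ ^ 2 ≤ ⟪z - x, F x⟫ := by
    intro x
    have hxfd : ∀ n, FiniteDimensional ℝ ↥(W n ⊔ Submodule.span ℝ {x}) := by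
      intro n; haveI := hWfd n; infer_instance
    have hle : ∀ n, W n ≤ W n ⊔ Submodule.span ℝ {x} := fun n => le_sup_left
    have hmemC : ∀ n, cp (W n ⊔ Submodule.span ℝ {x}) (hxfd n) ∈ C x := by
      intro n
      have h1 := hcp1 _ (hxfd n)
      rw [hKmem] at h1
      exact h1 x (le_sup_right (α := Submodule ℝ H) (Submodule.mem_span_singleton_self x))
    have hdist0 : Tendsto
        (fun n => dist (cp (W n) (hWfd n)) (cp (W n ⊔ Submodule.span ℝ {x}) (hxfd n)))
        atTop (𝓝 0) := by
      apply squeeze_zero (fun n => dist_nonneg)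
        (g := fun n : ℕ => Real.sqrt (4 * R * (1/(n+1))))
      · intro n
        rw [dist_eq_norm, Real.le_sqrt (norm_nonneg _) (by positivity)]
        exact hkey n _ (hxfd n) (hle n)
      · have h0 : Tendsto (fun N : ℕ => 4 * R * (1/(N+1) : ℝ)) atTop (𝓝 0) := by
          have h1 := tendsto_one_div_add_atTop_nhds_zero_nat (𝕜 := ℝ)
          simpa using h1.const_mul (4 * R)
        have h3 := (Real.continuous_sqrt.tendsto 0).comp h0
        simpa [Function.comp_def] using h3
    have htend : Tendsto (fun n => cp (W n ⊔ Submodule.span ℝ {x}) (hxfd n)) atTop (𝓝 z) :=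
      hz.congr_dist hdist0
    have hmem : z ∈ C x := (hCclosed x).mem_of_tendsto htend (Eventually.of_forall hmemC)
    rw [hCmem] at hmem
    exact hmem
  -- Minty's trick
  have hminty : ∀ w : H, ⟪w, F z⟫ ≤ 0 := by
    intro w
    have hseq : ∀ n : ℕ, ⟪w, F (z + (1/(n+1) : ℝ) • w)⟫ ≤ 0 := by
      intro n
      set t : ℝ := 1/(n+1) with ht'
      have ht : 0 < t := by positivity
      have h := hzC (z + t • w)
      have he : z - (z + t • w) = -(t • w) := by abel
      rw [he, inner_neg_left, real_inner_smul_left] at h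
      have hn : ‖-(t • w)‖ ^ 2 = t ^ 2 * ‖w‖ ^ 2 := by
        rw [norm_neg, norm_smul, Real.norm_eq_abs, abs_of_pos ht]
        ring
      rw [hn] at h
      by_contra hX
      push_neg at hX
      have h6 : 0 < t * ⟪w, F (z + t • w)⟫ := mul_pos ht hX
      nlinarith [h6, mul_nonneg (mul_nonneg hlam.le (sq_nonneg t)) (sq_nonneg ‖w‖)]
    have hlim : Tendsto (fun n : ℕ => ⟪w, F (z + (1/(n+1) : ℝ) • w)⟫) atTop (𝓝 ⟪w, F z⟫) := by
      have h1 : Tendsto (fun n : ℕ => z + (1/(n+1) : ℝ) • w) atTop (𝓝 z) := by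
        have h2 : Tendsto (fun n : ℕ => (1/(n+1) : ℝ) • w) atTop (𝓝 (0 : H)) := by
          have h3 : Tendsto (fun n : ℕ => (1/(n+1) : ℝ) • w) atTop (𝓝 ((0:ℝ) • w)) :=
            tendsto_one_div_add_atTop_nhds_zero_nat.smul_const w
          simpa using h3
        simpa using (tendsto_const_nhds (x := z) (f := atTop)).add h2
      exact ((continuous_const.inner hcont).tendsto z).comp h1
    exact le_of_tendsto hlim (Eventually.of_forall hseq)
  refine ⟨z, ?_⟩
  have h := hminty (F z)
  rw [real_inner_self_eq_norm_sq] at h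
  have h7 : ‖F z‖ = 0 := by nlinarith [norm_nonneg (F z)]
  exact norm_eq_zero.mp h7

end

theorem stmt_2
    {H : Type*} [NormedAddCommGroup H] [InnerProductSpace ℝ H] [CompleteSpace H]
    (F : H → H) (hcont : Continuous F) (lam : ℝ) (hlam : 0 < lam)
    (hdiss : ∀ x x' : H, (inner ℝ (x - x') (F x - F x') : ℝ) ≤ -lam * ‖x - x'‖ ^ 2) :
    ∃! ξ : H, F ξ = 0 := by
  obtain ⟨ξ, hξ⟩ := exists_zero F hcont lam hlam hdiss
  refine ⟨ξ, hξ, ?_⟩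
  intro y hy
  have h := hdiss y ξ
  rw [hy, hξ] at h
  simp only [sub_zero, inner_zero_right] at h
  have h1 : ‖y - ξ‖ ^ 2 ≤ 0 := by nlinarith
  have h2 : ‖y - ξ‖ = 0 := by nlinarith [norm_nonneg (y - ξ)]
  exact sub_eq_zero.mp (norm_eq_zero.mp h2)
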